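/- The following are equivalent for a commutative ring R and multiplicatively closed subset S: (1) R is S-coherent (every finitely generated ideal is S-finitely presented); (2) every direct product of flat R-modules is S-flat; (3) every direct product of copies of R (i.e., R^I for any index set I) is S-flat. -/

import Mathlib

/-- A module `M` is `S`-finite if it has a finitely generated submodule `N`
with `s • M ⊆ N` for some `s ∈ S`. -/
def IsSFinite (R : Type*) [CommRing R] (S : Submonoid R) (M : Type*) [AddCommGroup M]
    [Module R M] : Prop :=
  ∃ N : Submodule R M, N.FG ∧ ∃ s ∈ S, ∀ m : M, s • m ∈ N

/-- A module `M` is `S`-finitely presented if there is an exact sequence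
`0 → K → F → M → 0` with `F` finitely generated free and `K` `S`-finite. -/
def IsSFinitelyPresented (R : Type*) [CommRing R] (S : Submonoid R) (M : Type*)
    [AddCommGroup M] [Module R M] : Prop :=
  ∃ (n : ℕ) (f : (Fin n → R) →ₗ[R] M), Function.Surjective f ∧
    IsSFinite R S (LinearMap.ker f)

/-- A module `M` is `S`-flat if for every finitely generated ideal `I`,
the kernel of `I ⊗[R] M → R ⊗[R] M` is `S`-torsion. -/
def IsSFlat (R : Type*) [CommRing R] (S : Submonoid R) (M : Type*) [AddCommGroup M]
    [Module R M] : Prop :=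
  ∀ I : Ideal R, I.FG →
    ∀ x ∈ LinearMap.ker (LinearMap.rTensor M (I.subtype)), ∃ s ∈ S, s • x = 0

/-- `R` is `S`-coherent if every finitely generated ideal is `S`-finitely presented. -/
def IsSCoherent (R : Type*) [CommRing R] (S : Submonoid R) : Prop :=
  ∀ I : Ideal R, I.FG → IsSFinitelyPresented R S I

open TensorProduct

variable {R : Type} [CommRing R]

noncomputable def pe (n : ℕ) (M : Type) [AddCommGroup M] [Module R M] :
    ((Fin n → R) ⊗[R] M) ≃ₗ[R] (Fin n → M) :=
  (TensorProduct.comm R (Fin n → R) M).trans (TensorProduct.piScalarRight R R M (Fin n))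

lemma pe_tmul (n : ℕ) {M : Type} [AddCommGroup M] [Module R M] (v : Fin n → R) (m : M) :
    pe n M (v ⊗ₜ[R] m) = fun j => v j • m := by
  simp [pe]

lemma pe_sum_single (n : ℕ) {M : Type} [AddCommGroup M] [Module R M] (m : Fin n → M) :
    pe n M (∑ j, Pi.single j (1 : R) ⊗ₜ[R] m j) = m := by
  funext j'
  rw [map_sum]
  simp [pe_tmul, Pi.single_apply]

lemma pe_exists_rep (n : ℕ) {M : Type} [AddCommGroup M] [Module R M]
    (x : (Fin n → R) ⊗[R] M) :
    ∃ m : Fin n → M, x = ∑ j, Pi.single j (1 : R) ⊗ₜ[R] m j := by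
  refine ⟨pe n M x, (pe n M).injective ?_⟩
  rw [pe_sum_single]

set_option maxHeartbeats 1000000 in
set_option synthInstance.maxHeartbeats 400000 in
theorem lemB (S : Submonoid R) (h : ∀ ι : Type, IsSFlat R S (ι → R)) : IsSCoherent R S := by
  classical
  intro I hI
  obtain ⟨n, a, ha⟩ := Submodule.fg_iff_exists_fin_generating_family.mp hI
  set lc : (Fin n → R) →ₗ[R] R := Fintype.linearCombination R (fun j => (a j : R)) with hlc
  have hlca : ∀ v : Fin n → R, lc v = ∑ j, v j • a j := fun v => by
    rw [hlc, Fintype.linearCombination_apply]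
  have hlcI : ∀ v, lc v ∈ I := by
    intro v
    rw [hlca, ← ha]
    exact Submodule.sum_mem _ fun j _ => Submodule.smul_mem _ _
      (Submodule.subset_span (Set.mem_range_self j))
  set f : (Fin n → R) →ₗ[R] I := lc.codRestrict I hlcI with hf
  have hfsurj : Function.Surjective f := by
    rintro ⟨x, hx⟩
    rw [← ha, Submodule.mem_span_range_iff_exists_fun] at hx
    obtain ⟨c, hc⟩ := hx
    exact ⟨c, Subtype.ext ((hlca c).trans hc)⟩
  refine ⟨n, f, hfsurj, ?_⟩
  set m : Fin n → (↥(LinearMap.ker f) → R) :=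
    fun j κ => (κ : Fin n → R) j with hm
  set y : (Fin n → R) ⊗[R] (↥(LinearMap.ker f) → R) := ∑ j, Pi.single j (1 : R) ⊗ₜ[R] m j with hy
  set x : I ⊗[R] (↥(LinearMap.ker f) → R) := LinearMap.rTensor (↥(LinearMap.ker f) → R) f y with hx
  have hκ0 : ∀ κ : LinearMap.ker f, lc (κ : Fin n → R) = 0 := fun κ =>
    congrArg Subtype.val (LinearMap.mem_ker.mp κ.2)
  have hker : x ∈ LinearMap.ker (LinearMap.rTensor (↥(LinearMap.ker f) → R) I.subtype) := by
    rw [LinearMap.mem_ker, hx, ← LinearMap.comp_apply, ← LinearMap.rTensor_comp,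
      LinearMap.subtype_comp_codRestrict]
    have h1 : LinearMap.rTensor (↥(LinearMap.ker f) → R) lc y = ∑ j, lc (Pi.single j 1) ⊗ₜ[R] m j := by
      rw [hy, map_sum]
      exact Finset.sum_congr rfl fun j _ => LinearMap.rTensor_tmul _ _ _ _
    rw [h1, ← (TensorProduct.lid R (↥(LinearMap.ker f) → R)).map_eq_zero_iff, map_sum]
    have h2 : ∀ j : Fin n, (TensorProduct.lid R (↥(LinearMap.ker f) → R)) (lc (Pi.single j 1) ⊗ₜ[R] m j)
        = lc (Pi.single j 1) • m j := fun j => TensorProduct.lid_tmul _ _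
    rw [Finset.sum_congr rfl fun j _ => h2 j]
    funext κ
    simp only [Finset.sum_apply, Pi.smul_apply, Pi.zero_apply, smul_eq_mul, hm]
    have h3 : ∑ j, lc (Pi.single j 1) * (κ : Fin n → R) j = lc (κ : Fin n → R) := by
      rw [hlca (κ : Fin n → R)]
      refine Finset.sum_congr rfl fun j _ => ?_
      rw [hlca (Pi.single j 1)]
      simp [Pi.single_apply, smul_eq_mul, mul_comm]
    rw [h3, hκ0 κ]
  obtain ⟨s, hsS, hsx⟩ := h (LinearMap.ker f) I hI x hker
  have hexact := rTensor_exact (↥(LinearMap.ker f) → R) (LinearMap.exact_subtype_ker_map f) hfsurj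
  have hy0 : LinearMap.rTensor (↥(LinearMap.ker f) → R) f (s • y) = 0 := by
    rw [map_smul, ← hx, hsx]
  obtain ⟨w, hw⟩ := (hexact (s • y)).mp hy0
  obtain ⟨T, hT⟩ := TensorProduct.exists_finset w
  have hsy : s • y = ∑ p ∈ T, ((p.1 : Fin n → R) ⊗ₜ[R] p.2) := by
    rw [← hw, hT, map_sum]
    exact Finset.sum_congr rfl fun p _ => by rw [LinearMap.rTensor_tmul]; rfl
  refine ⟨Submodule.span R (T.image Prod.fst : Set (LinearMap.ker f)), ?_, s, hsS, ?_⟩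
  · exact ⟨T.image Prod.fst, rfl⟩
  intro κ
  have hpe : ∀ j, s • m j = ∑ p ∈ T, (p.1 : Fin n → R) j • p.2 := by
    intro j
    have h4 := congrArg (pe n (↥(LinearMap.ker f) → R)) hsy
    rw [map_smul, hy, pe_sum_single, map_sum] at h4
    have h5 := congrFun h4 j
    simp only [Pi.smul_apply, Finset.sum_apply] at h5
    rw [h5]
    refine Finset.sum_congr rfl fun p _ => ?_
    rw [pe_tmul]
  have heq : (s • κ : LinearMap.ker f) = ∑ p ∈ T, p.2 κ • p.1 := by
    apply Subtype.ext
    rw [Submodule.coe_smul]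
    push_cast [AddSubmonoidClass.coe_finset_sum]
    funext j
    have h6 := congrFun (hpe j) κ
    simp only [Pi.smul_apply, Finset.sum_apply, smul_eq_mul, hm, SetLike.val_smul] at h6 ⊢
    rw [h6]
    exact Finset.sum_congr rfl fun p _ => mul_comm _ _
  rw [heq]
  exact Submodule.sum_mem _ fun p hp => Submodule.smul_mem _ _
    (Submodule.subset_span (Finset.mem_coe.mpr (Finset.mem_image_of_mem Prod.fst hp)))

set_option maxHeartbeats 1000000 in
set_option synthInstance.maxHeartbeats 400000 in
theorem lemA (S : Submonoid R) (hc : IsSCoherent R S) (ι : Type) (N : ι → ModuleCat R)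
    (hN : ∀ i, Module.Flat R (N i : Type)) : IsSFlat R S (∀ i, (N i : Type)) := by
  classical
  intro I hI x hx
  rw [LinearMap.mem_ker] at hx
  obtain ⟨n, f, hfsurj, K₀, hK₀fg, s, hsS, hs⟩ := hc I hI
  obtain ⟨mg, c, hcspan⟩ := Submodule.fg_iff_exists_fin_generating_family.mp hK₀fg
  obtain ⟨y, hy⟩ := LinearMap.rTensor_surjective (∀ i, (N i : Type)) hfsurj x
  obtain ⟨m, hm⟩ := pe_exists_rep n y
  set lc : (Fin n → R) →ₗ[R] R := I.subtype ∘ₗ f with hlc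
  have hfc : ∀ u, f ((c u : Fin n → R)) = 0 := fun u => LinearMap.mem_ker.mp (c u).2
  have hrel : ∑ j, lc (Pi.single j 1) • m j = 0 := by
    have h0 : LinearMap.rTensor (∀ i, (N i : Type)) lc y = 0 := by
      rw [hlc, LinearMap.rTensor_comp, LinearMap.comp_apply, hy, hx]
    rw [hm, map_sum] at h0
    have h1 : ∀ j : Fin n, LinearMap.rTensor (∀ i, (N i : Type)) lc
        (Pi.single j (1 : R) ⊗ₜ[R] m j) = lc (Pi.single j 1) ⊗ₜ[R] m j :=
      fun j => LinearMap.rTensor_tmul _ _ _ _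
    rw [Finset.sum_congr rfl fun j _ => h1 j] at h0
    have h2 := congrArg (TensorProduct.lid R (∀ i, (N i : Type))) h0
    rw [map_sum, map_zero] at h2
    rw [← h2]
    exact (Finset.sum_congr rfl fun j _ => (TensorProduct.lid_tmul _ _).symm)
  have hcomp : ∀ i : ι, ∃ z : Fin mg → (N i : Type),
      s • (∑ j, Pi.single j (1 : R) ⊗ₜ[R] (m j i)) = ∑ u, ((c u : Fin n → R)) ⊗ₜ[R] z u := by
    intro i
    haveI := hN i
    have hreli : ∑ j, lc (Pi.single j 1) • (m j i) = 0 := by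
      have := congrFun hrel i
      simpa [Finset.sum_apply, Pi.smul_apply] using this
    have h2 : LinearMap.rTensor (N i : Type) lc (∑ j, Pi.single j (1 : R) ⊗ₜ[R] (m j i)) = 0 := by
      rw [map_sum]
      have h1 : ∀ j : Fin n, LinearMap.rTensor (N i : Type) lc
          (Pi.single j (1 : R) ⊗ₜ[R] (m j i)) = lc (Pi.single j 1) ⊗ₜ[R] (m j i) :=
        fun j => LinearMap.rTensor_tmul _ _ _ _
      rw [Finset.sum_congr rfl fun j _ => h1 j,
        ← (TensorProduct.lid R (N i : Type)).map_eq_zero_iff, map_sum]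
      rw [Finset.sum_congr rfl fun j _ => (TensorProduct.lid_tmul (m j i) _ : _)]
      exact hreli
    have h3 : LinearMap.rTensor (N i : Type) f (∑ j, Pi.single j (1 : R) ⊗ₜ[R] (m j i)) = 0 := by
      have hinj : Function.Injective (LinearMap.rTensor (N i : Type) I.subtype) :=
        Module.Flat.rTensor_preserves_injective_linearMap I.subtype I.injective_subtype
      apply hinj
      rw [map_zero, ← LinearMap.comp_apply, ← LinearMap.rTensor_comp]
      exact h2
    obtain ⟨w, hw⟩ := (rTensor_exact (N i : Type) (LinearMap.exact_subtype_ker_map f) hfsurj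
      (∑ j, Pi.single j (1 : R) ⊗ₜ[R] (m j i))).mp h3
    obtain ⟨T, hT⟩ := TensorProduct.exists_finset w
    have hcoef : ∀ p : (LinearMap.ker f) × (N i : Type), ∃ r : Fin mg → R,
        ∑ u, r u • c u = s • p.1 := by
      intro p
      have hmem : s • p.1 ∈ Submodule.span R (Set.range c) := by
        rw [hcspan]; exact hs p.1
      rwa [Submodule.mem_span_range_iff_exists_fun] at hmem
    choose r hr using hcoef
    refine ⟨fun u => ∑ p ∈ T, r p u • p.2, ?_⟩
    have step1 : s • (∑ j, Pi.single j (1 : R) ⊗ₜ[R] (m j i))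
        = ∑ p ∈ T, ((s • p.1 : LinearMap.ker f) : Fin n → R) ⊗ₜ[R] p.2 := by
      rw [← hw, hT, map_sum, Finset.smul_sum]
      refine Finset.sum_congr rfl fun p _ => ?_
      rw [LinearMap.rTensor_tmul, TensorProduct.smul_tmul']
      rfl
    rw [step1]
    have step2 : ∀ p ∈ T, ((s • p.1 : LinearMap.ker f) : Fin n → R) ⊗ₜ[R] p.2
        = ∑ u, r p u • (((c u : Fin n → R)) ⊗ₜ[R] p.2) := by
      intro p _
      have : ((s • p.1 : LinearMap.ker f) : Fin n → R)
          = ∑ u, r p u • ((c u : Fin n → R)) := by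
        rw [← hr p]
        push_cast [AddSubmonoidClass.coe_finset_sum]
        rfl
      rw [this, TensorProduct.sum_tmul]
      exact Finset.sum_congr rfl fun u _ => TensorProduct.smul_tmul' _ _ _
    rw [Finset.sum_congr rfl step2, Finset.sum_comm]
    refine Finset.sum_congr rfl fun u _ => ?_
    rw [TensorProduct.tmul_sum]
    exact Finset.sum_congr rfl fun p _ => (TensorProduct.tmul_smul _ _ _).symm
  choose z hz using hcomp
  have hglobal : s • y = ∑ u, ((c u : Fin n → R)) ⊗ₜ[R] (fun i => z i u) := by
    apply (pe n (∀ i, (N i : Type))).injective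
    rw [map_smul, hm, pe_sum_single, map_sum]
    funext j
    funext i
    have hzi := congrArg (pe n (N i : Type)) (hz i)
    rw [map_smul, pe_sum_single, map_sum] at hzi
    have hzij := congrFun hzi j
    simp only [Finset.sum_apply, Pi.smul_apply, pe_tmul] at hzij ⊢
    exact hzij
  refine ⟨s, hsS, ?_⟩
  rw [← hy, ← map_smul, hglobal, map_sum]
  have hzero : ∀ u : Fin mg, LinearMap.rTensor (∀ i, (N i : Type)) f
      (((c u : Fin n → R)) ⊗ₜ[R] (fun i => z i u)) = 0 := by
    intro u
    rw [LinearMap.rTensor_tmul, hfc u, TensorProduct.zero_tmul]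
  rw [Finset.sum_congr rfl fun u _ => hzero u, Finset.sum_const, smul_zero]

theorem lemC (S : Submonoid R)
    (h : ∀ (ι : Type) (N : ι → ModuleCat R), (∀ i, Module.Flat R (N i : Type)) →
      IsSFlat R S (∀ i, (N i : Type))) (ι : Type) : IsSFlat R S (ι → R) :=
  h ι (fun _ => ModuleCat.of R R) (fun _ => inferInstanceAs (Module.Flat R R))

theorem s_version_of_chase_theorem {R : Type} [CommRing R] (S : Submonoid R) :
    (IsSCoherent R S ↔
      ∀ (ι : Type) (N : ι → ModuleCat R), (∀ i, Module.Flat R (N i : Type)) →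
        IsSFlat R S (∀ i, (N i : Type))) ∧
    ((∀ (ι : Type) (N : ι → ModuleCat R), (∀ i, Module.Flat R (N i : Type)) →
        IsSFlat R S (∀ i, (N i : Type))) ↔
      ∀ ι : Type, IsSFlat R S (ι → R)) := by
  constructor
  · exact ⟨fun hc ι N hN => lemA S hc ι N hN, fun h => lemB S (fun ι => lemC S h ι)⟩
  · exact ⟨fun h ι => lemC S h ι, fun h ι N hN => lemA S (lemB S h) ι N hN⟩
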